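/- Let (bₙ)_{n≥0} be a nonincreasing sequence of positive reals with bₙ → 0 and Σₙ 2ⁿ bₙ = ∞, and let x² : [0,1] → ℝ be the function that vanishes on the Cantor set C and on each removed middle-third interval I_{n,k} of level n equals 2·3^{n+1}·bₙ·dist(t, C) (a tent of height bₙ). Then for every c > 0, TV^c(x²,[0,1]) = Σ_{n≥0} 2^{n+1}·max(bₙ − c, 0). -/

import Mathlib

open scoped ENNReal
open Filter

/-- Truncated variation of `x` with parameter `c` on `[s,t]`. -/
noncomputable def truncVar (x : ℝ → ℝ) (c s t : ℝ) : ℝ≥0∞ :=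
  ⨆ (n : ℕ) (u : Fin (n + 1) → ℝ) (_ : Monotone u) (_ : u 0 = s)
    (_ : u (Fin.last n) = t),
    ∑ i : Fin n, ENNReal.ofReal (|x (u i.succ) - x (u i.castSucc)| - c)

/-- Left endpoint of the `k`-th (in increasing order, `k < 2ⁿ`) removed open
middle-third interval of level `n` in the Cantor construction. -/
noncomputable def cantorLeft (n k : ℕ) : ℝ :=
  (∑ i ∈ Finset.range n,
    (if Nat.testBit k (n - 1 - i) then (2 : ℝ) else 0) * (3 : ℝ) ^ (-((i : ℤ) + 1)))
    + (3 : ℝ) ^ (-((n : ℤ) + 1))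

/-- The `k`-th removed open interval `I_{n,k}` of level `n`, of length `3^{−(n+1)}`. -/
noncomputable def removedInterval (n k : ℕ) : Set ℝ :=
  Set.Ioo (cantorLeft n k) (cantorLeft n k + (3 : ℝ) ^ (-((n : ℤ) + 1)))

/-- The Cantor set: `[0,1]` minus all removed middle-third intervals. -/
noncomputable def cantorThirdsSet : Set ℝ :=
  Set.Icc 0 1 \ ⋃ (n : ℕ), ⋃ (k : ℕ) (_ : k < 2 ^ n), removedInterval n k

/-- `k_n(t)`: the number of level-`n` removed intervals entirely contained in `[0,t]`. -/
noncomputable def levelCount (n : ℕ) (t : ℝ) : ℕ :=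
  ((Finset.range (2 ^ n)).filter
    (fun k => cantorLeft n k + (3 : ℝ) ^ (-((n : ℤ) + 1)) ≤ t)).card

namespace CantorTent

def D (n k : ℕ) : ℕ := ∑ j ∈ Finset.range n, (if Nat.testBit k j then 2 else 0) * 3 ^ j

def Good (E : ℕ) : Prop := ∀ j, E / 3 ^ j % 3 ≠ 1

lemma D_succ (n k : ℕ) :
    D (n + 1) k = (if Nat.testBit k 0 then 2 else 0) + 3 * D n (k / 2) := by
  rw [D, Finset.sum_range_succ']
  simp only [pow_zero, mul_one]
  rw [add_comm]
  congr 1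
  rw [D, Finset.mul_sum]
  apply Finset.sum_congr rfl
  intro i _
  rw [show i + 1 = i.succ from rfl, Nat.testBit_succ, pow_succ]
  ring

lemma good_D (n k : ℕ) : Good (D n k) := by
  induction n generalizing k with
  | zero => intro j; simp [D]
  | succ n ih =>
    rw [D_succ]
    set bb := if Nat.testBit k 0 then 2 else 0 with hbb
    have hbb2 : bb = 0 ∨ bb = 2 := by rw [hbb]; split <;> simp
    intro j
    cases j with
    | zero => simp only [pow_zero, Nat.div_one]; omega
    | succ j =>
      have h1 : (bb + 3 * D n (k / 2)) / 3 ^ (j + 1) = D n (k / 2) / 3 ^ j := by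
        rw [pow_succ, mul_comm ((3:ℕ)^j) 3, ← Nat.div_div_eq_div_mul]
        congr 1
        omega
      rw [h1]; exact ih (k/2) j

lemma D_le (n k : ℕ) : D n k ≤ 3 ^ n - 1 := by
  induction n generalizing k with
  | zero => simp [D]
  | succ n ih =>
    have := ih (k / 2)
    rw [D_succ]
    have h3 : 1 ≤ 3 ^ n := Nat.one_le_pow _ _ (by norm_num)
    have h4 : (3:ℕ) ^ (n+1) = 3 * 3 ^ n := by ring
    split <;> omega

lemma D_inj (n : ℕ) : ∀ k j, k < 2 ^ n → j < 2 ^ n → D n k = D n j → k = j := by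
  induction n with
  | zero => intro k j hk hj _; omega
  | succ n ih =>
    intro k j hk hj h
    rw [D_succ, D_succ] at h
    have hk0 : (Nat.testBit k 0 = true) ↔ (k % 2 = 1) := by
      rw [Nat.testBit_zero]; simp
    have hj0 : (Nat.testBit j 0 = true) ↔ (j % 2 = 1) := by
      rw [Nat.testBit_zero]; simp
    have h2n : 2 ^ (n+1) = 2 * 2 ^ n := by ring
    rcases Bool.eq_false_or_eq_true (Nat.testBit k 0) with hbk | hbk <;>
      rcases Bool.eq_false_or_eq_true (Nat.testBit j 0) with hbj | hbj <;>
      rw [hbk, hbj] at h <;>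
      simp only [if_true, if_false, Bool.false_eq_true] at h <;>
      simp only [hbk, hbj, Bool.false_eq_true, false_iff, true_iff] at hk0 hj0
    · have h2 : k / 2 = j / 2 := ih _ _ (by omega) (by omega) (by omega)
      omega
    · omega
    · omega
    · have h2 : k / 2 = j / 2 := ih _ _ (by omega) (by omega) (by omega)
      omega

lemma zpow_neg_nat (n : ℕ) : (3 : ℝ) ^ (-((n : ℤ) + 1)) = ((3 : ℝ) ^ (n + 1))⁻¹ := by
  rw [show -((n : ℤ) + 1) = -((n + 1 : ℕ) : ℤ) by push_cast; ring, zpow_neg, zpow_natCast]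

lemma ellpos (n : ℕ) : 0 < (3:ℝ) ^ (-((n : ℤ) + 1)) := by positivity

lemma cantorLeft_eq (n k : ℕ) :
    cantorLeft n k = ((3 * D n k + 1 : ℕ) : ℝ) / 3 ^ (n + 1) := by
  rw [cantorLeft, zpow_neg_nat]
  have hrefl : ∑ i ∈ Finset.range n,
      (if Nat.testBit k (n - 1 - i) then (2 : ℝ) else 0) * (3 : ℝ) ^ (-((i : ℤ) + 1))
      = ∑ j ∈ Finset.range n,
      (if Nat.testBit k j then (2 : ℝ) else 0) * (3 : ℝ) ^ (-(((n - 1 - j : ℕ) : ℤ) + 1)) := by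
    rw [← Finset.sum_range_reflect
      (fun j => (if Nat.testBit k j then (2 : ℝ) else 0) * (3 : ℝ) ^ (-(((n - 1 - j : ℕ) : ℤ) + 1))) n]
    apply Finset.sum_congr rfl
    intro i hi
    rw [Finset.mem_range] at hi
    have h1 : n - 1 - (n - 1 - i) = i := by omega
    rw [h1]
  rw [hrefl]
  have hD : ((D n k : ℕ) : ℝ) = ∑ j ∈ Finset.range n,
      (if Nat.testBit k j then (2 : ℝ) else 0) * (3 : ℝ) ^ j := by
    rw [D]
    push_cast
    apply Finset.sum_congr rfl
    intro j _
    split <;> simp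
  have hterm : ∀ j ∈ Finset.range n,
      (if Nat.testBit k j then (2 : ℝ) else 0) * (3 : ℝ) ^ (-(((n - 1 - j : ℕ) : ℤ) + 1))
      = ((if Nat.testBit k j then (2 : ℝ) else 0) * (3 : ℝ) ^ j) * ((3:ℝ) ^ n)⁻¹ := by
    intro j hj
    rw [Finset.mem_range] at hj
    rw [mul_assoc]
    congr 1
    have h1 : (-(((n - 1 - j : ℕ) : ℤ) + 1)) = (j : ℤ) - (n : ℤ) := by
      have : ((n - 1 - j : ℕ) : ℤ) = (n : ℤ) - 1 - j := by
        have := Int.ofNat_sub (by omega : j ≤ n - 1)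
        omega
      omega
    rw [h1, zpow_sub₀ (by norm_num : (3:ℝ) ≠ 0), zpow_natCast, zpow_natCast]
    rw [div_eq_mul_inv]
  rw [Finset.sum_congr rfl hterm, ← Finset.sum_mul, ← hD]
  have h3 : (3:ℝ) ^ (n+1) = 3 ^ n * 3 := by ring
  push_cast
  rw [h3]
  have h3n : (3:ℝ) ^ n ≠ 0 := by positivity
  field_simp

lemma removed_eq (n k : ℕ) :
    removedInterval n k = Set.Ioo (((3 * D n k + 1 : ℕ) : ℝ) / 3 ^ (n + 1))
      (((3 * D n k + 2 : ℕ) : ℝ) / 3 ^ (n + 1)) := by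
  rw [removedInterval, cantorLeft_eq, zpow_neg_nat]
  congr 1
  push_cast
  have h3n : (3:ℝ) ^ (n+1) ≠ 0 := by positivity
  field_simp
  ring

lemma lemB {a b p q : ℕ} (h : p ≤ q) :
    ((a : ℝ) / 3 ^ p < (b : ℝ) / 3 ^ q) ↔ a * 3 ^ (q - p) < b := by
  rw [div_lt_div_iff₀ (by positivity) (by positivity)]
  have hcast : ((a : ℝ) * 3 ^ q < (b : ℝ) * 3 ^ p) ↔ (a * 3 ^ q < b * 3 ^ p) := by
    constructor
    · intro hh; exact_mod_cast hh
    · intro hh; exact_mod_cast hh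
  rw [hcast]
  have h3 : (3:ℕ) ^ q = 3 ^ (q - p) * 3 ^ p := by
    rw [← pow_add]; congr 1; omega
  rw [h3, ← mul_assoc]
  exact Nat.mul_lt_mul_right (Nat.pow_pos (by norm_num))

lemma lemA {a b p q : ℕ} (h : q ≤ p) :
    ((a : ℝ) / 3 ^ p < (b : ℝ) / 3 ^ q) ↔ a < b * 3 ^ (p - q) := by
  rw [div_lt_div_iff₀ (by positivity) (by positivity)]
  have hcast : ((a : ℝ) * 3 ^ q < (b : ℝ) * 3 ^ p) ↔ (a * 3 ^ q < b * 3 ^ p) := by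
    constructor
    · intro hh; exact_mod_cast hh
    · intro hh; exact_mod_cast hh
  rw [hcast]
  have h3 : (3:ℕ) ^ p = 3 ^ (p - q) * 3 ^ q := by
    rw [← pow_add]; congr 1; omega
  rw [h3, ← mul_assoc]
  exact Nat.mul_lt_mul_right (Nat.pow_pos (by norm_num))

lemma keyNotMem {NN r : ℕ} (hN : Good NN) (hr : r = 1 ∨ r = 2) (n m j : ℕ) :
    ((3 * NN + r : ℕ) : ℝ) / 3 ^ (n + 1) ∉ removedInterval m j := by
  rw [removed_eq]
  rintro ⟨h1, h2⟩
  set E := D m j with hE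
  have hgE := good_D m j
  rcases le_or_gt n m with hnm | hmn
  · rw [lemA (by omega : n + 1 ≤ m + 1)] at h1
    rw [lemB (by omega : n + 1 ≤ m + 1)] at h2
    have : m + 1 - (n + 1) = m - n := by omega
    rw [this] at h1 h2
    omega
  · rw [lemB (by omega : m + 1 ≤ n + 1)] at h1
    rw [lemA (by omega : m + 1 ≤ n + 1)] at h2
    have hq : n + 1 - (m + 1) = n - m := by omega
    rw [hq] at h1 h2
    set Q := n - m with hQ
    have hQ1 : 1 ≤ Q := by omega
    have hfl : (3 * NN + r) / 3 ^ Q = 3 * E + 1 := by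
      have hle : (3 * E + 1) * 3 ^ Q ≤ 3 * NN + r := by omega
      have hlt : 3 * NN + r < (3 * E + 2) * 3 ^ Q := h2
      have hp : 0 < 3 ^ Q := Nat.pow_pos (by norm_num)
      have u1 : 3 * E + 1 ≤ (3 * NN + r) / 3 ^ Q := (Nat.le_div_iff_mul_le hp).2 hle
      have u2 : (3 * NN + r) / 3 ^ Q < 3 * E + 2 := (Nat.div_lt_iff_lt_mul hp).2 hlt
      omega
    have hsplit : (3 * NN + r) / 3 ^ Q = NN / 3 ^ (Q - 1) := by
      have hQp : (3:ℕ) ^ Q = 3 * 3 ^ (Q - 1) := by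
        rw [← pow_succ']; congr 1; omega
      have hstep : (3 * NN + r) / 3 = NN := by omega
      rw [hQp, ← Nat.div_div_eq_div_mul, hstep]
    have := hN (Q - 1)
    rw [← hsplit, hfl] at this
    omega

lemma cantorLeft_notMem (n k m j : ℕ) : cantorLeft n k ∉ removedInterval m j := by
  rw [cantorLeft_eq]
  exact keyNotMem (good_D n k) (Or.inl rfl) n m j

lemma cantorRight_notMem (n k m j : ℕ) :
    cantorLeft n k + (3:ℝ) ^ (-((n : ℤ) + 1)) ∉ removedInterval m j := by
  have h : cantorLeft n k + (3:ℝ) ^ (-((n : ℤ) + 1))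
      = ((3 * D n k + 2 : ℕ) : ℝ) / 3 ^ (n + 1) := by
    rw [cantorLeft_eq, zpow_neg_nat]
    push_cast
    have h3n : (3:ℝ) ^ (n+1) ≠ 0 := by positivity
    field_simp
    ring
  rw [h]
  exact keyNotMem (good_D n k) (Or.inr rfl) n m j

lemma removed_subset (n k : ℕ) : removedInterval n k ⊆ Set.Ioo (0:ℝ) 1 := by
  rw [removed_eq]
  intro s hs
  obtain ⟨h1, h2⟩ := hs
  constructor
  · have : (0:ℝ) ≤ ((3 * D n k + 1 : ℕ) : ℝ) / 3 ^ (n + 1) := by positivity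
    linarith
  · have hle : (3 * D n k + 2 : ℕ) ≤ 3 ^ (n+1) := by
      have := D_le n k
      have h1 : 1 ≤ 3 ^ n := Nat.one_le_pow _ _ (by norm_num)
      have : (3:ℕ) ^ (n+1) = 3 * 3 ^ n := by ring
      omega
    have : ((3 * D n k + 2 : ℕ) : ℝ) / 3 ^ (n + 1) ≤ 1 := by
      rw [div_le_one (by positivity)]
      calc ((3 * D n k + 2 : ℕ) : ℝ) ≤ ((3 ^ (n+1) : ℕ) : ℝ) := by exact_mod_cast hle
        _ = 3 ^ (n+1) := by push_cast; ring
    linarith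

lemma removed_disjoint_aux {n k m j : ℕ} (hk : k < 2 ^ n) (hj : j < 2 ^ m) (hnm : n ≤ m)
    {s : ℝ} (hs1 : s ∈ removedInterval n k) (hs2 : s ∈ removedInterval m j) :
    n = m ∧ k = j := by
  rw [removed_eq] at hs1 hs2
  obtain ⟨a1, a2⟩ := hs1
  obtain ⟨b1, b2⟩ := hs2
  have c1 : ((3 * D n k + 1 : ℕ) : ℝ) / 3 ^ (n+1) < ((3 * D m j + 2 : ℕ) : ℝ) / 3 ^ (m+1) :=
    lt_trans a1 b2
  have c2 : ((3 * D m j + 1 : ℕ) : ℝ) / 3 ^ (m+1) < ((3 * D n k + 2 : ℕ) : ℝ) / 3 ^ (n+1) :=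
    lt_trans b1 a2
  rw [lemB (by omega : n + 1 ≤ m + 1)] at c1
  rw [lemA (by omega : n + 1 ≤ m + 1)] at c2
  rw [show m + 1 - (n + 1) = m - n by omega] at c1 c2
  rcases Nat.eq_or_lt_of_le hnm with heq | hlt
  · subst heq
    simp only [Nat.sub_self, pow_zero, mul_one] at c1 c2
    exact ⟨rfl, D_inj n k j hk hj (by omega)⟩
  · exfalso
    set Q := m - n with hQ
    have hQ1 : 1 ≤ Q := by omega
    have hp : 0 < (3:ℕ) ^ Q := Nat.pow_pos (by norm_num)
    have u1 : 3 * D n k + 1 ≤ (3 * D m j + 1) / 3 ^ Q :=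
      (Nat.le_div_iff_mul_le hp).2 (by omega)
    have u2 : (3 * D m j + 1) / 3 ^ Q < 3 * D n k + 2 :=
      (Nat.div_lt_iff_lt_mul hp).2 (by omega)
    have hfl : (3 * D m j + 1) / 3 ^ Q = 3 * D n k + 1 := by omega
    have hsplit : (3 * D m j + 1) / 3 ^ Q = D m j / 3 ^ (Q - 1) := by
      have hQp : (3:ℕ) ^ Q = 3 * 3 ^ (Q - 1) := by
        rw [← pow_succ']; congr 1; omega
      have hstep : (3 * D m j + 1) / 3 = D m j := by omega
      rw [hQp, ← Nat.div_div_eq_div_mul, hstep]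
    have := good_D m j (Q - 1)
    rw [← hsplit, hfl] at this
    omega

lemma removed_disjoint {n k m j : ℕ} (hk : k < 2 ^ n) (hj : j < 2 ^ m)
    {s : ℝ} (hs1 : s ∈ removedInterval n k) (hs2 : s ∈ removedInterval m j) :
    n = m ∧ k = j := by
  rcases le_total n m with h | h
  · exact removed_disjoint_aux hk hj h hs1 hs2
  · obtain ⟨e1, e2⟩ := removed_disjoint_aux hj hk h hs2 hs1
    exact ⟨e1.symm, e2.symm⟩

lemma mem_C_iff {s : ℝ} :
    s ∈ cantorThirdsSet ↔ s ∈ Set.Icc (0:ℝ) 1 ∧ ∀ m j, j < 2 ^ m → s ∉ removedInterval m j := by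
  rw [cantorThirdsSet, Set.mem_diff]
  simp only [Set.mem_iUnion, not_exists]

lemma right_le_one (n k : ℕ) : cantorLeft n k + (3:ℝ) ^ (-((n : ℤ) + 1)) ≤ 1 := by
  rw [cantorLeft_eq, zpow_neg_nat]
  have hle : (3 * D n k + 2 : ℕ) ≤ 3 ^ (n+1) := by
    have := D_le n k
    have h1 : 1 ≤ 3 ^ n := Nat.one_le_pow _ _ (by norm_num)
    have : (3:ℕ) ^ (n+1) = 3 * 3 ^ n := by ring
    omega
  have hcast : ((3 * D n k + 1 : ℕ) : ℝ) + 1 ≤ ((3:ℝ) ^ (n+1)) := by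
    calc ((3 * D n k + 1 : ℕ) : ℝ) + 1 = ((3 * D n k + 2 : ℕ) : ℝ) := by push_cast; ring
      _ ≤ ((3 ^ (n+1) : ℕ) : ℝ) := by exact_mod_cast hle
      _ = (3:ℝ) ^ (n+1) := by push_cast; ring
  have h3 : (0:ℝ) < 3 ^ (n+1) := by positivity
  rw [div_add' _ _ _ (ne_of_gt h3), div_le_one h3]
  calc ((3 * D n k + 1 : ℕ) : ℝ) + (3 ^ (n+1))⁻¹ * 3 ^ (n+1)
      = ((3 * D n k + 1 : ℕ) : ℝ) + 1 := by field_simp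
    _ ≤ 3 ^ (n+1) := hcast

lemma left_mem_icc (n k : ℕ) : cantorLeft n k ∈ Set.Icc (0:ℝ) 1 := by
  constructor
  · rw [cantorLeft_eq]; positivity
  · have := right_le_one n k
    have := ellpos n
    linarith

lemma right_mem_icc (n k : ℕ) : cantorLeft n k + (3:ℝ) ^ (-((n : ℤ) + 1)) ∈ Set.Icc (0:ℝ) 1 := by
  constructor
  · have h0 : (0:ℝ) ≤ cantorLeft n k := (left_mem_icc n k).1
    have := ellpos n
    linarith
  · exact right_le_one n k

lemma left_mem_C (n k : ℕ) : cantorLeft n k ∈ cantorThirdsSet :=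
  mem_C_iff.2 ⟨left_mem_icc n k, fun m j _ => cantorLeft_notMem n k m j⟩

lemma right_mem_C (n k : ℕ) :
    cantorLeft n k + (3:ℝ) ^ (-((n : ℤ) + 1)) ∈ cantorThirdsSet :=
  mem_C_iff.2 ⟨right_mem_icc n k, fun m j _ => cantorRight_notMem n k m j⟩

lemma zero_mem_C : (0:ℝ) ∈ cantorThirdsSet := by
  apply mem_C_iff.2
  refine ⟨by simp, fun m j _ hmem => ?_⟩
  exact absurd (removed_subset m j hmem).1 (by norm_num)

lemma one_mem_C : (1:ℝ) ∈ cantorThirdsSet := by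
  apply mem_C_iff.2
  refine ⟨by simp, fun m j _ hmem => ?_⟩
  exact absurd (removed_subset m j hmem).2 (by norm_num)

lemma C_inter_removed {n k : ℕ} {y : ℝ} (hy : y ∈ cantorThirdsSet) (hk : k < 2 ^ n) :
    y ∉ removedInterval n k := (mem_C_iff.1 hy).2 n k hk

lemma infDist_tent {n k : ℕ} (hk : k < 2 ^ n) {s : ℝ} (hs : s ∈ removedInterval n k) :
    Metric.infDist s cantorThirdsSet
      = min (s - cantorLeft n k) (cantorLeft n k + (3:ℝ) ^ (-((n : ℤ) + 1)) - s) := by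
  obtain ⟨hs1, hs2⟩ := hs
  apply le_antisymm
  · rcases le_total (s - cantorLeft n k) (cantorLeft n k + (3:ℝ) ^ (-((n : ℤ) + 1)) - s) with h | h
    · rw [min_eq_left h]
      calc Metric.infDist s cantorThirdsSet ≤ dist s (cantorLeft n k) :=
            Metric.infDist_le_dist_of_mem (left_mem_C n k)
        _ = s - cantorLeft n k := by rw [Real.dist_eq, abs_of_pos (by linarith)]
    · rw [min_eq_right h]
      calc Metric.infDist s cantorThirdsSet
            ≤ dist s (cantorLeft n k + (3:ℝ) ^ (-((n : ℤ) + 1))) :=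
            Metric.infDist_le_dist_of_mem (right_mem_C n k)
        _ = cantorLeft n k + (3:ℝ) ^ (-((n : ℤ) + 1)) - s := by
            rw [Real.dist_eq, abs_of_neg (by linarith)]; ring
  · by_contra hlt
    push_neg at hlt
    rw [Metric.infDist_lt_iff ⟨0, zero_mem_C⟩] at hlt
    obtain ⟨y, hyC, hyd⟩ := hlt
    have hy := C_inter_removed hyC hk
    rw [removedInterval, Set.mem_Ioo, not_and_or, not_lt, not_lt] at hy
    rw [Real.dist_eq] at hyd
    set L := cantorLeft n k
    set R := cantorLeft n k + (3:ℝ) ^ (-((n : ℤ) + 1))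
    rcases hy with h | h
    · have h1 : |s - y| = s - y := abs_of_pos (by linarith)
      have h2 : min (s - L) (R - s) ≤ s - y := le_trans (min_le_left _ _) (by linarith)
      linarith
    · have h1 : |s - y| = y - s := by rw [abs_of_neg (by linarith)]; ring
      have h2 : min (s - L) (R - s) ≤ y - s := le_trans (min_le_right _ _) (by linarith)
      linarith

/-- midpoint of a removed interval -/
noncomputable def cantorMid (n k : ℕ) : ℝ := cantorLeft n k + (3:ℝ) ^ (-((n : ℤ) + 1)) / 2

lemma mid_mem (n k : ℕ) : cantorMid n k ∈ removedInterval n k := by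
  have := ellpos n
  constructor
  · rw [cantorMid]; linarith
  · rw [cantorMid]; linarith

lemma left_lt_mid (n k : ℕ) : cantorLeft n k < cantorMid n k := by
  have := ellpos n; rw [cantorMid]; linarith

lemma mid_lt_right (n k : ℕ) :
    cantorMid n k < cantorLeft n k + (3:ℝ) ^ (-((n : ℤ) + 1)) := by
  have := ellpos n; rw [cantorMid]; linarith

lemma left_inj {n k m j : ℕ} (hk : k < 2 ^ n) (hj : j < 2 ^ m)
    (h : cantorLeft n k = cantorLeft m j) : n = m ∧ k = j := by
  set d := min ((3:ℝ) ^ (-((n : ℤ) + 1))) ((3:ℝ) ^ (-((m : ℤ) + 1))) with hd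
  have hd0 : 0 < d := lt_min (ellpos n) (ellpos m)
  have h1 : cantorLeft n k + d / 2 ∈ removedInterval n k := by
    constructor
    · linarith
    · have : d ≤ (3:ℝ) ^ (-((n : ℤ) + 1)) := min_le_left _ _
      have := ellpos n
      linarith
  have h2 : cantorLeft n k + d / 2 ∈ removedInterval m j := by
    rw [h]
    constructor
    · linarith
    · have : d ≤ (3:ℝ) ^ (-((m : ℤ) + 1)) := min_le_right _ _
      have := ellpos m
      linarith
  exact removed_disjoint hk hj h1 h2

lemma mid_inj {n k m j : ℕ} (hk : k < 2 ^ n) (hj : j < 2 ^ m)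
    (h : cantorMid n k = cantorMid m j) : n = m ∧ k = j :=
  removed_disjoint hk hj (mid_mem n k) (h ▸ mid_mem m j)

lemma left_ne_mid (n k m j : ℕ) : cantorLeft n k ≠ cantorMid m j := by
  intro h
  exact cantorLeft_notMem n k m j (h ▸ mid_mem m j)

lemma alpha {a d cc : ℝ} (hc : 0 ≤ cc) (hd : 0 ≤ d) (hda : d ≤ a) :
    ENNReal.ofReal (d - cc) + ENNReal.ofReal (a - d - cc) ≤ ENNReal.ofReal (a - cc) := by
  rcases le_or_gt d cc with h | h
  · rw [ENNReal.ofReal_eq_zero.2 (by linarith), zero_add]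
    exact ENNReal.ofReal_le_ofReal (by linarith)
  rcases le_or_gt (a - d) cc with h2 | h2
  · rw [ENNReal.ofReal_eq_zero.2 (by linarith : a - d - cc ≤ 0), add_zero]
    exact ENNReal.ofReal_le_ofReal (by linarith)
  · rw [← ENNReal.ofReal_add (by linarith) (by linarith)]
    exact ENNReal.ofReal_le_ofReal (by linarith)

lemma beta {a b cc : ℝ} (ha : 0 ≤ a) (hb : 0 ≤ b) :
    ENNReal.ofReal (|a - b| - cc) ≤ ENNReal.ofReal (a - cc) + ENNReal.ofReal (b - cc) := by
  rcases le_total a b with h | h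
  · rw [abs_of_nonpos (by linarith), neg_sub]
    exact le_trans (ENNReal.ofReal_le_ofReal (by linarith)) le_add_self
  · rw [abs_of_nonneg (by linarith)]
    exact le_trans (ENNReal.ofReal_le_ofReal (by linarith)) le_self_add



/-- the invariant potential -/
noncomputable def Psi (f : ℝ → ℝ) (cc : ℝ) (v : ℕ → ℝ) (τ : ℕ → Option (ℕ × ℕ))
    (h : ℕ × ℕ → ℝ) (mid : ℕ × ℕ → ℝ) (j : ℕ) : ℝ≥0∞ :=
  match τ j with
  | none => 0
  | some p => if v j ≤ mid p then ENNReal.ofReal (h p - cc) + ENNReal.ofReal (h p - f (v j) - cc)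
      else ENNReal.ofReal (f (v j) - cc)

noncomputable def SS (τ : ℕ → Option (ℕ × ℕ)) (J : ℕ) : Finset (ℕ × ℕ) :=
  (Finset.range (J + 1)).biUnion (fun i => (τ i).toFinset)

lemma mem_SS {τ : ℕ → Option (ℕ × ℕ)} {J : ℕ} {p : ℕ × ℕ} :
    p ∈ SS τ J ↔ ∃ i ≤ J, τ i = some p := by
  simp only [SS, Finset.mem_biUnion, Finset.mem_range, Option.mem_toFinset, Option.mem_def]
  constructor
  · rintro ⟨i, hi, h⟩; exact ⟨i, by omega, h⟩
  · rintro ⟨i, hi, h⟩; exact ⟨i, by omega, h⟩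

lemma upper_aux (f : ℝ → ℝ) (cc : ℝ) (hcc : 0 < cc) (v : ℕ → ℝ) (hv : Monotone v)
    (τ : ℕ → Option (ℕ × ℕ)) (h : ℕ × ℕ → ℝ) (mid : ℕ × ℕ → ℝ)
    (hτ0 : τ 0 = none)
    (hnone : ∀ i, τ i = none → f (v i) = 0)
    (hbd : ∀ i p, τ i = some p → 0 ≤ f (v i) ∧ f (v i) ≤ h p)
    (hinc : ∀ i j p, τ i = some p → τ j = some p → i ≤ j → v j ≤ mid p → f (v i) ≤ f (v j))
    (hdec : ∀ i j p, τ i = some p → τ j = some p → i ≤ j → ¬ (v i ≤ mid p) → f (v j) ≤ f (v i))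
    (hcont : ∀ i j l p, i ≤ j → j ≤ l → τ i = some p → τ l = some p → τ j = some p) :
    ∀ J, (∑ i ∈ Finset.range J, ENNReal.ofReal (|f (v (i+1)) - f (v i)| - cc))
        + Psi f cc v τ h mid J ≤ ∑ p ∈ SS τ J, 2 * ENNReal.ofReal (h p - cc) := by
  -- exit lemma
  have hexit : ∀ j p, τ j = some p → ENNReal.ofReal (f (v j) - cc) ≤ Psi f cc v τ h mid j := by
    intro j p hj
    rw [Psi, hj]
    simp only
    split
    · calc ENNReal.ofReal (f (v j) - cc) ≤ ENNReal.ofReal (h p - cc) :=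
          ENNReal.ofReal_le_ofReal (by have := (hbd j p hj).2; linarith)
        _ ≤ _ := le_self_add
    · exact le_refl _
  -- enter lemma
  have henter : ∀ j p, τ j = some p →
      ENNReal.ofReal (f (v j) - cc) + Psi f cc v τ h mid j
        ≤ 2 * ENNReal.ofReal (h p - cc) := by
    intro j p hj
    obtain ⟨hy0, hyh⟩ := hbd j p hj
    rw [Psi, hj]
    simp only
    rw [two_mul]
    split
    · rw [← add_assoc, add_comm (ENNReal.ofReal (f (v j) - cc)) (ENNReal.ofReal (h p - cc))]
      rw [add_assoc]
      exact add_le_add (le_refl _) (alpha (le_of_lt hcc) hy0 hyh)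
    · exact add_le_add (ENNReal.ofReal_le_ofReal (by linarith))
        (ENNReal.ofReal_le_ofReal (by linarith))
  intro J
  induction J with
  | zero =>
    simp only [Finset.range_zero, Finset.sum_empty, zero_add, Psi, hτ0]
    exact zero_le
  | succ J ih =>
    rw [Finset.sum_range_succ]
    have hSsub : SS τ J ⊆ SS τ (J+1) := by
      intro p hp
      rw [mem_SS] at hp ⊢
      obtain ⟨i, hi, hh⟩ := hp
      exact ⟨i, by omega, hh⟩
    rcases hJ1 : τ (J+1) with _ | p'
    · -- τ (J+1) = none
      have hy1 : f (v (J+1)) = 0 := hnone _ hJ1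
      have hPsi1 : Psi f cc v τ h mid (J+1) = 0 := by rw [Psi, hJ1]
      rw [hPsi1, add_zero]
      have hterm : ENNReal.ofReal (|f (v (J+1)) - f (v J)| - cc) ≤ Psi f cc v τ h mid J := by
        rcases hJ : τ J with _ | p
        · have : f (v J) = 0 := hnone _ hJ
          rw [hy1, this]
          simp only [sub_zero, abs_zero, zero_sub]
          rw [ENNReal.ofReal_eq_zero.2 (by linarith), Psi, hJ]
        · have hy0 := (hbd J p hJ).1
          rw [hy1]
          calc ENNReal.ofReal (|0 - f (v J)| - cc) = ENNReal.ofReal (f (v J) - cc) := by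
                rw [zero_sub, abs_neg, abs_of_nonneg hy0]
            _ ≤ _ := hexit J p hJ
      calc _ ≤ (∑ i ∈ Finset.range J, ENNReal.ofReal (|f (v (i+1)) - f (v i)| - cc))
            + Psi f cc v τ h mid J := add_le_add (le_refl _) hterm
        _ ≤ ∑ p ∈ SS τ J, 2 * ENNReal.ofReal (h p - cc) := ih
        _ ≤ _ := Finset.sum_le_sum_of_subset hSsub
    · -- τ (J+1) = some p'
      obtain ⟨hy10, hy1h⟩ := hbd (J+1) p' hJ1
      have hvm : v J ≤ v (J+1) := hv (by omega)
      rcases hJ : τ J with _ | p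
      · -- entering from C
        have hnew : p' ∉ SS τ J := by
          intro hp
          obtain ⟨i, hi, hhi⟩ := mem_SS.1 hp
          have := hcont i J (J+1) p' hi (by omega) hhi hJ1
          rw [hJ] at this
          exact Option.some_ne_none _ this.symm
        have hSeq : SS τ (J+1) = insert p' (SS τ J) := by
          ext q
          rw [Finset.mem_insert, mem_SS, mem_SS]
          constructor
          · rintro ⟨i, hi, hhi⟩
            rcases Nat.lt_or_ge i (J+1) with h' | h'
            · exact Or.inr ⟨i, by omega, hhi⟩
            · left
              have : i = J + 1 := by omega
              rw [this] at hhi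
              rw [hJ1] at hhi
              exact (Option.some_inj.1 hhi).symm
          · rintro (rfl | ⟨i, hi, hhi⟩)
            · exact ⟨J+1, le_refl _, hJ1⟩
            · exact ⟨i, by omega, hhi⟩
        rw [hSeq, Finset.sum_insert hnew]
        have hyJ : f (v J) = 0 := hnone _ hJ
        have hterm : ENNReal.ofReal (|f (v (J+1)) - f (v J)| - cc)
            = ENNReal.ofReal (f (v (J+1)) - cc) := by
          rw [hyJ, sub_zero, abs_of_nonneg hy10]
        have hPsiJ : Psi f cc v τ h mid J = 0 := by rw [Psi, hJ]
        calc ∑ i ∈ Finset.range J, ENNReal.ofReal (|f (v (i+1)) - f (v i)| - cc)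
              + ENNReal.ofReal (|f (v (J+1)) - f (v J)| - cc) + Psi f cc v τ h mid (J+1)
            = (∑ i ∈ Finset.range J, ENNReal.ofReal (|f (v (i+1)) - f (v i)| - cc)
              + Psi f cc v τ h mid J)
              + (ENNReal.ofReal (f (v (J+1)) - cc) + Psi f cc v τ h mid (J+1)) := by
              rw [hPsiJ, hterm]; ring
          _ ≤ (∑ p ∈ SS τ J, 2 * ENNReal.ofReal (h p - cc))
              + 2 * ENNReal.ofReal (h p' - cc) :=
              add_le_add ih (henter (J+1) p' hJ1)
          _ = 2 * ENNReal.ofReal (h p' - cc) + ∑ p ∈ SS τ J, 2 * ENNReal.ofReal (h p - cc) := by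
              ring
      · -- τ J = some p
        obtain ⟨hy00, hy0h⟩ := hbd J p hJ
        by_cases hpp : p = p'
        · -- same tent
          subst hpp
          have hmemSS : p ∈ SS τ J := mem_SS.2 ⟨J, le_refl _, hJ⟩
          have hSeq : SS τ (J+1) = SS τ J := by
            apply Finset.Subset.antisymm
            · intro q hq
              obtain ⟨i, hi, hhi⟩ := mem_SS.1 hq
              rcases Nat.lt_or_ge i (J+1) with h' | h'
              · exact mem_SS.2 ⟨i, by omega, hhi⟩
              · have : i = J + 1 := by omega
                rw [this, hJ1] at hhi
                exact Option.some_inj.1 hhi ▸ hmemSS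
            · exact hSsub
          rw [hSeq]
          have hkey : ENNReal.ofReal (|f (v (J+1)) - f (v J)| - cc) + Psi f cc v τ h mid (J+1)
              ≤ Psi f cc v τ h mid J := by
            by_cases h1 : v (J+1) ≤ mid p
            · have hJm : v J ≤ mid p := le_trans hvm h1
              have hmono : f (v J) ≤ f (v (J+1)) := hinc J (J+1) p hJ hJ1 (by omega) h1
              rw [Psi, hJ1, Psi, hJ]
              simp only [if_pos h1, if_pos hJm]
              rw [abs_of_nonneg (by linarith)]
              calc ENNReal.ofReal (f (v (J+1)) - f (v J) - cc)
                  + (ENNReal.ofReal (h p - cc) + ENNReal.ofReal (h p - f (v (J+1)) - cc))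
                  = ENNReal.ofReal (h p - cc) + (ENNReal.ofReal (f (v (J+1)) - f (v J) - cc)
                    + ENNReal.ofReal (h p - f (v J) - cc - (f (v (J+1)) - f (v J)))) := by
                    have : h p - f (v (J+1)) - cc = h p - f (v J) - cc - (f (v (J+1)) - f (v J)) := by ring
                    rw [this]; ring
                _ ≤ ENNReal.ofReal (h p - cc) + ENNReal.ofReal (h p - f (v J) - cc) := by
                    apply add_le_add (le_refl _)
                    have := alpha (a := h p - f (v J)) (d := f (v (J+1)) - f (v J)) (cc := cc)
                      (le_of_lt hcc) (by linarith) (by linarith)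
                    calc ENNReal.ofReal (f (v (J+1)) - f (v J) - cc)
                        + ENNReal.ofReal (h p - f (v J) - cc - (f (v (J+1)) - f (v J)))
                        = ENNReal.ofReal (f (v (J+1)) - f (v J) - cc)
                        + ENNReal.ofReal (h p - f (v J) - (f (v (J+1)) - f (v J)) - cc) := by
                          congr 2; ring
                      _ ≤ ENNReal.ofReal (h p - f (v J) - cc) := this
            · by_cases h2 : v J ≤ mid p
              · -- straddle
                rw [Psi, hJ1, Psi, hJ]
                simp only [if_neg h1, if_pos h2]
                have habs : |f (v (J+1)) - f (v J)| ≤ h p - min (f (v J)) (f (v (J+1))) := by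
                  rcases le_total (f (v J)) (f (v (J+1))) with hle | hle
                  · rw [min_eq_left hle, abs_of_nonneg (by linarith)]; linarith
                  · rw [min_eq_right hle, abs_of_nonpos (by linarith)]; linarith
                have hterm : ENNReal.ofReal (|f (v (J+1)) - f (v J)| - cc)
                    ≤ ENNReal.ofReal (h p - min (f (v J)) (f (v (J+1))) - cc) :=
                  ENNReal.ofReal_le_ofReal (by linarith)
                rcases le_total (f (v J)) (f (v (J+1))) with hle | hle
                · rw [min_eq_left hle] at hterm
                  calc ENNReal.ofReal (|f (v (J+1)) - f (v J)| - cc)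
                      + ENNReal.ofReal (f (v (J+1)) - cc)
                      ≤ ENNReal.ofReal (h p - f (v J) - cc) + ENNReal.ofReal (h p - cc) :=
                        add_le_add hterm (ENNReal.ofReal_le_ofReal (by linarith))
                    _ = ENNReal.ofReal (h p - cc) + ENNReal.ofReal (h p - f (v J) - cc) := by ring
                · rw [min_eq_right hle] at hterm
                  calc ENNReal.ofReal (|f (v (J+1)) - f (v J)| - cc)
                      + ENNReal.ofReal (f (v (J+1)) - cc)
                      ≤ ENNReal.ofReal (h p - f (v (J+1)) - cc)
                        + ENNReal.ofReal (f (v (J+1)) - cc) := add_le_add hterm (le_refl _)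
                    _ = ENNReal.ofReal (f (v (J+1)) - cc)
                        + ENNReal.ofReal (h p - f (v (J+1)) - cc) := by ring
                    _ ≤ ENNReal.ofReal (h p - cc) := alpha (le_of_lt hcc) hy10 hy1h
                    _ ≤ _ := le_self_add
              · -- both on the right side
                have hdecr : f (v (J+1)) ≤ f (v J) := hdec J (J+1) p hJ hJ1 (by omega) h2
                have h1' : ¬ (v (J+1) ≤ mid p) := fun hcon => h2 (le_trans hvm hcon)
                rw [Psi, hJ1, Psi, hJ]
                simp only [if_neg h1', if_neg h2]
                rw [abs_of_nonpos (by linarith), neg_sub]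
                calc ENNReal.ofReal (f (v J) - f (v (J+1)) - cc) + ENNReal.ofReal (f (v (J+1)) - cc)
                    = ENNReal.ofReal (f (v (J+1)) - cc)
                      + ENNReal.ofReal (f (v J) - f (v (J+1)) - cc) := by ring
                  _ ≤ ENNReal.ofReal (f (v J) - cc) := alpha (le_of_lt hcc) hy10 (by linarith)
          calc _ ≤ ∑ i ∈ Finset.range J, ENNReal.ofReal (|f (v (i+1)) - f (v i)| - cc)
                + Psi f cc v τ h mid J := by rw [add_assoc]; exact add_le_add (le_refl _) hkey
            _ ≤ _ := ih
        · -- different tents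
          have hnew : p' ∉ SS τ J := by
            intro hp
            obtain ⟨i, hi, hhi⟩ := mem_SS.1 hp
            have := hcont i J (J+1) p' hi (by omega) hhi hJ1
            rw [hJ] at this
            exact hpp (Option.some_inj.1 this)
          have hSeq : SS τ (J+1) = insert p' (SS τ J) := by
            ext q
            rw [Finset.mem_insert, mem_SS, mem_SS]
            constructor
            · rintro ⟨i, hi, hhi⟩
              rcases Nat.lt_or_ge i (J+1) with h' | h'
              · exact Or.inr ⟨i, by omega, hhi⟩
              · left
                have : i = J + 1 := by omega
                rw [this, hJ1] at hhi
                exact (Option.some_inj.1 hhi).symm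
            · rintro (rfl | ⟨i, hi, hhi⟩)
              · exact ⟨J+1, le_refl _, hJ1⟩
              · exact ⟨i, by omega, hhi⟩
          rw [hSeq, Finset.sum_insert hnew]
          have hterm : ENNReal.ofReal (|f (v (J+1)) - f (v J)| - cc)
              ≤ ENNReal.ofReal (f (v J) - cc) + ENNReal.ofReal (f (v (J+1)) - cc) := by
            rw [abs_sub_comm]
            exact beta hy00 hy10
          calc ∑ i ∈ Finset.range J, ENNReal.ofReal (|f (v (i+1)) - f (v i)| - cc)
                + ENNReal.ofReal (|f (v (J+1)) - f (v J)| - cc) + Psi f cc v τ h mid (J+1)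
              ≤ ∑ i ∈ Finset.range J, ENNReal.ofReal (|f (v (i+1)) - f (v i)| - cc)
                + (ENNReal.ofReal (f (v J) - cc) + ENNReal.ofReal (f (v (J+1)) - cc))
                + Psi f cc v τ h mid (J+1) := by
                exact add_le_add (add_le_add (le_refl _) hterm) (le_refl _)
            _ = (∑ i ∈ Finset.range J, ENNReal.ofReal (|f (v (i+1)) - f (v i)| - cc)
                + ENNReal.ofReal (f (v J) - cc))
                + (ENNReal.ofReal (f (v (J+1)) - cc) + Psi f cc v τ h mid (J+1)) := by ring
            _ ≤ (∑ i ∈ Finset.range J, ENNReal.ofReal (|f (v (i+1)) - f (v i)| - cc)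
                + Psi f cc v τ h mid J) + 2 * ENNReal.ofReal (h p' - cc) :=
                add_le_add (add_le_add (le_refl _) (hexit J p hJ)) (henter (J+1) p' hJ1)
            _ ≤ (∑ p ∈ SS τ J, 2 * ENNReal.ofReal (h p - cc)) + 2 * ENNReal.ofReal (h p' - cc) :=
                add_le_add ih (le_refl _)
            _ = 2 * ENNReal.ofReal (h p' - cc) + ∑ p ∈ SS τ J, 2 * ENNReal.ofReal (h p - cc) := by
                ring

lemma consec {P : Finset ℝ} {n₀ : ℕ} (hcard : P.card = n₀ + 1)
    {a bb : ℝ} (ha : a ∈ P) (hb : bb ∈ P) (hab : a < bb)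
    (hno : ∀ z ∈ P, ¬ (a < z ∧ z < bb)) :
    ∃ i : Fin n₀, ((P.orderIsoOfFin hcard) i.castSucc : ℝ) = a
      ∧ ((P.orderIsoOfFin hcard) i.succ : ℝ) = bb := by
  set e := P.orderIsoOfFin hcard
  set ia := e.symm ⟨a, ha⟩ with hia
  set ib := e.symm ⟨bb, hb⟩ with hib
  have hlt : ia < ib := by
    rw [hia, hib]
    exact e.symm.lt_iff_lt.2 (by exact_mod_cast hab)
  have hval : (ia : ℕ) < n₀ := by
    have := hlt
    have h2 : (ib : ℕ) ≤ n₀ := Nat.lt_succ_iff.1 ib.isLt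
    omega
  refine ⟨⟨ia, hval⟩, ?_, ?_⟩
  · have : (⟨ia, hval⟩ : Fin n₀).castSucc = ia := by
      apply Fin.ext; simp
    rw [this, hia]
    simp [e.apply_symm_apply]
  · set isucc : Fin (n₀ + 1) := (⟨ia, hval⟩ : Fin n₀).succ with hisucc
    have h1 : a < (e isucc : ℝ) := by
      have : ia < isucc := by
        rw [hisucc]; exact Fin.lt_def.2 (by simp)
      have := e.lt_iff_lt.2 this
      rw [hia] at this
      rw [e.apply_symm_apply] at this
      exact_mod_cast this
    have h2 : (e isucc : ℝ) ≤ bb := by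
      have hle : isucc ≤ ib := by
        have hlt' : (ia : ℕ) < (ib : ℕ) := Fin.lt_def.1 hlt
        rw [hisucc]
        apply Fin.le_def.2
        simp only [Fin.val_succ]
        omega
      have := e.le_iff_le.2 hle
      rw [hib, e.apply_symm_apply] at this
      exact_mod_cast this
    rcases lt_or_eq_of_le h2 with h3 | h3
    · exact absurd ⟨h1, h3⟩ (hno _ (e isucc).2)
    · exact h3

end CantorTent


open CantorTent in
/-- For the Cantor tent function `x²` with tent heights `bₙ`,
`TV^c(x²,[0,1]) = Σₙ 2^{n+1}·max(bₙ − c, 0)` for every `c > 0`. -/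
theorem truncVar_cantorTent (b : ℕ → ℝ) (hb : Antitone b) (hbpos : ∀ n, 0 < b n)
    (hblim : Tendsto b atTop (nhds 0))
    (hbdiv : ¬ Summable (fun n => (2 : ℝ) ^ n * b n))
    (x : ℝ → ℝ) (hxC : ∀ s ∈ cantorThirdsSet, x s = 0)
    (hxI : ∀ n k : ℕ, k < 2 ^ n → ∀ s ∈ removedInterval n k,
      x s = 2 * 3 ^ (n + 1) * b n * Metric.infDist s cantorThirdsSet)
    (c : ℝ) (hc : 0 < c) :
    truncVar x c 0 1 = ∑' n : ℕ, 2 ^ (n + 1) * ENNReal.ofReal (max (b n - c) 0) := by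
  classical
  -- basic facts about x on tents
  have hxval : ∀ n k : ℕ, k < 2 ^ n → ∀ s ∈ removedInterval n k,
      x s = 2 * 3 ^ (n + 1) * b n *
        min (s - cantorLeft n k) (cantorLeft n k + (3:ℝ) ^ (-((n : ℤ) + 1)) - s) := by
    intro n k hk s hs
    rw [hxI n k hk s hs, infDist_tent hk hs]
  have hK1 : ∀ n : ℕ, 2 * (3:ℝ) ^ (n + 1) * b n * ((3:ℝ) ^ (-((n : ℤ) + 1)) / 2) = b n := by
    intro n
    rw [zpow_neg_nat]
    have h3 : (3:ℝ) ^ (n+1) ≠ 0 := by positivity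
    field_simp
  have hxmid : ∀ n k : ℕ, k < 2 ^ n → x (cantorMid n k) = b n := by
    intro n k hk
    rw [hxval n k hk _ (mid_mem n k)]
    have hmm : min (cantorMid n k - cantorLeft n k)
        (cantorLeft n k + (3:ℝ) ^ (-((n : ℤ) + 1)) - cantorMid n k)
        = (3:ℝ) ^ (-((n : ℤ) + 1)) / 2 := by
      rw [cantorMid,
        show cantorLeft n k + (3:ℝ) ^ (-((n:ℤ) + 1)) / 2 - cantorLeft n k
          = (3:ℝ) ^ (-((n:ℤ)+1))/2 by ring,
        show cantorLeft n k + (3:ℝ) ^ (-((n:ℤ)+1))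
            - (cantorLeft n k + (3:ℝ) ^ (-((n:ℤ)+1))/2) = (3:ℝ) ^ (-((n:ℤ)+1))/2 by ring,
        min_self]
    rw [hmm, hK1]
  have hxnonneg : ∀ n k : ℕ, k < 2 ^ n → ∀ s ∈ removedInterval n k, 0 ≤ x s := by
    intro n k hk s hs
    rw [hxval n k hk s hs]
    obtain ⟨h1, h2⟩ := hs
    have hb' := (hbpos n).le
    have hmin : 0 ≤ min (s - cantorLeft n k) (cantorLeft n k + (3:ℝ)^(-((n:ℤ)+1)) - s) :=
      le_min (by linarith) (by linarith)
    have h31 : (0:ℝ) ≤ 2 * 3 ^ (n+1) := by positivity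
    exact mul_nonneg (mul_nonneg h31 hb') hmin
  have hxle : ∀ n k : ℕ, k < 2 ^ n → ∀ s ∈ removedInterval n k, x s ≤ b n := by
    intro n k hk s hs
    obtain ⟨h1, h2⟩ := hs
    rw [hxval n k hk s ⟨h1, h2⟩]
    have hmin : min (s - cantorLeft n k) (cantorLeft n k + (3:ℝ)^(-((n:ℤ)+1)) - s)
        ≤ (3:ℝ) ^ (-((n : ℤ) + 1)) / 2 := by
      rcases le_total (s - cantorLeft n k) (cantorLeft n k + (3:ℝ)^(-((n:ℤ)+1)) - s) with h | h
      · rw [min_eq_left h]; linarith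
      · rw [min_eq_right h]; linarith
    have h31 : (0:ℝ) ≤ 2 * 3 ^ (n+1) * b n :=
      mul_nonneg (by positivity) (hbpos n).le
    calc 2 * 3 ^ (n+1) * b n * min (s - cantorLeft n k)
          (cantorLeft n k + (3:ℝ)^(-((n:ℤ)+1)) - s)
        ≤ 2 * 3 ^ (n + 1) * b n * ((3:ℝ) ^ (-((n : ℤ) + 1)) / 2) :=
          mul_le_mul_of_nonneg_left hmin h31
      _ = b n := hK1 n
  -- the threshold M
  obtain ⟨M, hM⟩ := Filter.eventually_atTop.1 (hblim.eventually (gt_mem_nhds hc))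
  -- index set of relevant tents
  set A : Finset (ℕ × ℕ) :=
    (Finset.range M).biUnion (fun n => (Finset.range (2 ^ n)).image (fun k => (n, k))) with hA
  have memA : ∀ p : ℕ × ℕ, p ∈ A ↔ p.1 < M ∧ p.2 < 2 ^ p.1 := by
    intro p
    simp only [hA, Finset.mem_biUnion, Finset.mem_range, Finset.mem_image]
    constructor
    · rintro ⟨n, hn, k, hk, rfl⟩
      exact ⟨hn, hk⟩
    · rintro ⟨hh1, hh2⟩
      exact ⟨p.1, hh1, p.2, hh2, rfl⟩
  have hsumA : ∑ p ∈ A, 2 * ENNReal.ofReal (b p.1 - c)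
      = ∑ n ∈ Finset.range M, 2 ^ (n + 1) * ENNReal.ofReal (b n - c) := by
    rw [hA, Finset.sum_biUnion]
    · apply Finset.sum_congr rfl
      intro n _
      rw [Finset.sum_image (fun a _ a' _ h => (Prod.ext_iff.1 h).2)]
      simp only [Finset.sum_const, Finset.card_range, nsmul_eq_mul]
      rw [pow_succ]
      push_cast
      ring
    · intro n1 h1 n2 h2 hne
      simp only [Function.onFun]
      rw [Finset.disjoint_left]
      intro p hp1 hp2
      simp only [Finset.mem_image, Finset.mem_range] at hp1 hp2
      obtain ⟨k1, _, hk1⟩ := hp1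
      obtain ⟨k2, _, hk2⟩ := hp2
      apply hne
      rw [← hk1] at hk2
      exact ((Prod.ext_iff.1 hk2).1).symm
  have hofmax : ∀ r : ℝ, ENNReal.ofReal (max r 0) = ENNReal.ofReal r := by
    intro r
    rcases le_total r 0 with h | h
    · rw [max_eq_right h, ENNReal.ofReal_zero]
      exact (ENNReal.ofReal_eq_zero.2 h).symm
    · rw [max_eq_left h]
  have hts : ∑' n : ℕ, 2 ^ (n + 1) * ENNReal.ofReal (max (b n - c) 0)
      = ∑ n ∈ Finset.range M, 2 ^ (n + 1) * ENNReal.ofReal (b n - c) := by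
    rw [tsum_eq_sum (s := Finset.range M) ?_]
    · exact Finset.sum_congr rfl (fun n _ => by rw [hofmax])
    · intro n hn
      rw [Finset.mem_range, not_lt] at hn
      have hbn : b n - c < 0 := by have := hM n hn; linarith
      rw [max_eq_right hbn.le, ENNReal.ofReal_zero, mul_zero]
  -- monotonicity of x within a tent
  have hxmleft : ∀ n k : ℕ, k < 2 ^ n → ∀ s s' : ℝ, s ∈ removedInterval n k →
      s' ∈ removedInterval n k → s ≤ s' → s' ≤ cantorMid n k → x s ≤ x s' := by
    intro n k hk s s' hs hs' hss hsm
    obtain ⟨a1, a2⟩ := hs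
    obtain ⟨b1, b2⟩ := hs'
    rw [hxval n k hk s ⟨a1, a2⟩, hxval n k hk s' ⟨b1, b2⟩]
    rw [cantorMid] at hsm
    have hmin1 : min (s - cantorLeft n k) (cantorLeft n k + (3:ℝ)^(-((n:ℤ)+1)) - s)
        = s - cantorLeft n k := min_eq_left (by linarith)
    have hmin2 : min (s' - cantorLeft n k) (cantorLeft n k + (3:ℝ)^(-((n:ℤ)+1)) - s')
        = s' - cantorLeft n k := min_eq_left (by linarith)
    rw [hmin1, hmin2]
    apply mul_le_mul_of_nonneg_left (by linarith)
    exact mul_nonneg (by positivity) (hbpos n).le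
  have hxmright : ∀ n k : ℕ, k < 2 ^ n → ∀ s s' : ℝ, s ∈ removedInterval n k →
      s' ∈ removedInterval n k → s ≤ s' → ¬ (s ≤ cantorMid n k) → x s' ≤ x s := by
    intro n k hk s s' hs hs' hss hsm
    obtain ⟨a1, a2⟩ := hs
    obtain ⟨b1, b2⟩ := hs'
    rw [hxval n k hk s ⟨a1, a2⟩, hxval n k hk s' ⟨b1, b2⟩]
    rw [cantorMid, not_le] at hsm
    have hmin1 : min (s - cantorLeft n k) (cantorLeft n k + (3:ℝ)^(-((n:ℤ)+1)) - s)
        = cantorLeft n k + (3:ℝ)^(-((n:ℤ)+1)) - s := min_eq_right (by linarith)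
    have hmin2 : min (s' - cantorLeft n k) (cantorLeft n k + (3:ℝ)^(-((n:ℤ)+1)) - s')
        = cantorLeft n k + (3:ℝ)^(-((n:ℤ)+1)) - s' := min_eq_right (by linarith)
    rw [hmin1, hmin2]
    apply mul_le_mul_of_nonneg_left (by linarith)
    exact mul_nonneg (by positivity) (hbpos n).le
  have hupper : truncVar x c 0 1 ≤ ∑ p ∈ A, 2 * ENNReal.ofReal (b p.1 - c) := by
    rw [truncVar]
    apply iSup_le; intro N
    apply iSup_le; intro u
    apply iSup_le; intro hu
    apply iSup_le; intro hu0
    apply iSup_le; intro hu1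
    set v : ℕ → ℝ := fun i => u ⟨min i N, Nat.lt_succ_of_le (min_le_right i N)⟩ with hv
    have hvmono : Monotone v := by
      intro i j hij
      apply hu
      rw [Fin.mk_le_mk]
      omega
    have hv01 : ∀ i, v i ∈ Set.Icc (0:ℝ) 1 := by
      intro i
      constructor
      · rw [← hu0]; exact hu (Fin.zero_le _)
      · rw [← hu1]; exact hu (Fin.le_last _)
    have hvi : ∀ i : Fin (N + 1), v i.val = u i := by
      intro i
      rw [hv]
      simp only
      congr 1
      apply Fin.ext
      simp only
      omega
    have hvN : v N = 1 := by
      rw [← hu1, ← hvi (Fin.last N)]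
      rfl
    have hv0 : v 0 = 0 := by
      rw [← hu0, ← hvi 0]
      rfl
    set τ : ℕ → Option (ℕ × ℕ) := fun i =>
      if h : ∃ p : ℕ × ℕ, p.2 < 2 ^ p.1 ∧ v i ∈ removedInterval p.1 p.2
      then some h.choose else none with hτ
    have hτsome : ∀ i p, τ i = some p → p.2 < 2 ^ p.1 ∧ v i ∈ removedInterval p.1 p.2 := by
      intro i p hip
      rw [hτ] at hip
      simp only at hip
      split at hip
      case isTrue h =>
        rw [Option.some_inj] at hip
        rw [← hip]
        exact h.choose_spec
      case isFalse h => exact absurd hip (by simp)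
    have hτmem : ∀ i (p : ℕ × ℕ), p.2 < 2 ^ p.1 → v i ∈ removedInterval p.1 p.2 →
        τ i = some p := by
      intro i p h1 h2
      rw [hτ]
      simp only
      split
      case isTrue h =>
        rw [Option.some_inj]
        obtain ⟨w1, w2⟩ := h.choose_spec
        obtain ⟨e1, e2⟩ := removed_disjoint w1 h1 w2 h2
        exact Prod.ext e1 e2
      case isFalse h => exact absurd ⟨p, h1, h2⟩ h
    have hτnone : ∀ i, τ i = none → x (v i) = 0 := by
      intro i hi
      apply hxC
      apply mem_C_iff.2 ⟨hv01 i, ?_⟩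
      intro m j hj hmem
      rw [hτ] at hi
      simp only at hi
      split at hi
      case isTrue h => exact absurd hi (by simp)
      case isFalse h => exact h ⟨(m, j), hj, hmem⟩
    have hτN : τ N = none := by
      rw [hτ]
      simp only
      split
      case isTrue h =>
        exfalso
        obtain ⟨p, h1, h2⟩ := h
        have := (removed_subset p.1 p.2 h2).2
        rw [hvN] at this
        exact lt_irrefl 1 this
      case isFalse h => rfl
    have hτ0 : τ 0 = none := by
      rw [hτ]
      simp only
      split
      case isTrue h =>
        exfalso
        obtain ⟨p, h1, h2⟩ := h
        have := (removed_subset p.1 p.2 h2).1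
        rw [hv0] at this
        exact lt_irrefl 0 this
      case isFalse h => rfl
    have hcont : ∀ i j l (p : ℕ × ℕ), i ≤ j → j ≤ l → τ i = some p → τ l = some p →
        τ j = some p := by
      intro i j l p hij hjl hip hlp
      obtain ⟨hval, hi2⟩ := hτsome i p hip
      obtain ⟨_, hl2⟩ := hτsome l p hlp
      apply hτmem j p hval
      exact ⟨lt_of_lt_of_le hi2.1 (hvmono hij), lt_of_le_of_lt (hvmono hjl) hl2.2⟩
    have haux := upper_aux x c hc v hvmono τ (fun p => b p.1) (fun p => cantorMid p.1 p.2)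
      hτ0 hτnone
      (fun i p hip => ⟨hxnonneg p.1 p.2 (hτsome i p hip).1 _ (hτsome i p hip).2,
        hxle p.1 p.2 (hτsome i p hip).1 _ (hτsome i p hip).2⟩)
      (fun i j p hip hjp hij hjm =>
        hxmleft p.1 p.2 (hτsome i p hip).1 _ _ (hτsome i p hip).2 (hτsome j p hjp).2
          (hvmono hij) hjm)
      (fun i j p hip hjp hij him =>
        hxmright p.1 p.2 (hτsome i p hip).1 _ _ (hτsome i p hip).2 (hτsome j p hjp).2
          (hvmono hij) him)
      hcont N
    -- convert the Fin-sum
    have hsum : ∑ i : Fin N, ENNReal.ofReal (|x (u i.succ) - x (u i.castSucc)| - c)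
        = ∑ i ∈ Finset.range N, ENNReal.ofReal (|x (v (i+1)) - x (v i)| - c) := by
      rw [← Fin.sum_univ_eq_sum_range (fun i => ENNReal.ofReal (|x (v (i+1)) - x (v i)| - c)) N]
      apply Finset.sum_congr rfl
      intro i _
      have e1 : v (i.val + 1) = u i.succ := by
        rw [← hvi i.succ]
        congr 1
      have e2 : v i.val = u i.castSucc := by
        rw [← hvi i.castSucc]
        congr 1
      rw [e1, e2]
    rw [hsum]
    calc ∑ i ∈ Finset.range N, ENNReal.ofReal (|x (v (i+1)) - x (v i)| - c)
        ≤ ∑ i ∈ Finset.range N, ENNReal.ofReal (|x (v (i+1)) - x (v i)| - c)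
          + Psi x c v τ (fun p => b p.1) (fun p => cantorMid p.1 p.2) N := le_self_add
      _ ≤ ∑ p ∈ SS τ N, 2 * ENNReal.ofReal (b p.1 - c) := haux
      _ ≤ ∑ p ∈ A, 2 * ENNReal.ofReal (b p.1 - c) := by
          rw [← Finset.sum_filter_add_sum_filter_not (SS τ N) (fun p => p.1 < M)]
          have hz : ∑ p ∈ (SS τ N).filter (fun p => ¬ p.1 < M),
              2 * ENNReal.ofReal (b p.1 - c) = 0 := by
            apply Finset.sum_eq_zero
            intro p hp
            rw [Finset.mem_filter] at hp
            have hbn : b p.1 - c < 0 := by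
              have := hM p.1 (by omega)
              linarith
            rw [ENNReal.ofReal_eq_zero.2 hbn.le, mul_zero]
          rw [hz, add_zero]
          apply Finset.sum_le_sum_of_subset
          intro p hp
          rw [Finset.mem_filter] at hp
          obtain ⟨hp1, hp2⟩ := hp
          obtain ⟨i, _, hip⟩ := mem_SS.1 hp1
          exact (memA p).2 ⟨hp2, (hτsome i p hip).1⟩
  have hlower : ∑ p ∈ A, 2 * ENNReal.ofReal (b p.1 - c) ≤ truncVar x c 0 1 := by
    set P : Finset ℝ := insert 0 (insert 1 (A.biUnion (fun p =>
      {cantorLeft p.1 p.2, cantorMid p.1 p.2,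
       cantorLeft p.1 p.2 + (3:ℝ) ^ (-((p.1 : ℤ) + 1))}))) with hP
    have memP : ∀ z, z ∈ P ↔ z = 0 ∨ z = 1 ∨ ∃ p ∈ A, z = cantorLeft p.1 p.2
        ∨ z = cantorMid p.1 p.2 ∨ z = cantorLeft p.1 p.2 + (3:ℝ) ^ (-((p.1 : ℤ) + 1)) := by
      intro z
      simp only [hP, Finset.mem_insert, Finset.mem_biUnion, Finset.mem_singleton]
    have hPsub : ∀ z ∈ P, z ∈ Set.Icc (0:ℝ) 1 := by
      intro z hz
      rcases (memP z).1 hz with rfl | rfl | ⟨p, _, hcase⟩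
      · exact ⟨le_refl 0, by norm_num⟩
      · exact ⟨by norm_num, le_refl 1⟩
      · rcases hcase with rfl | rfl | rfl
        · exact left_mem_icc p.1 p.2
        · have h1 := (left_mem_icc p.1 p.2).1
          have h2 := right_le_one p.1 p.2
          have h3 := ellpos p.1
          rw [cantorMid]
          constructor <;> [linarith; linarith]
        · exact right_mem_icc p.1 p.2
    have h0P : (0:ℝ) ∈ P := (memP 0).2 (Or.inl rfl)
    have h1P : (1:ℝ) ∈ P := (memP 1).2 (Or.inr (Or.inl rfl))
    have hPne : P.Nonempty := ⟨0, h0P⟩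
    set n₀ := P.card - 1 with hn₀
    have hcard : P.card = n₀ + 1 := by
      have := Finset.card_pos.2 hPne
      omega
    set e := P.orderIsoOfFin hcard with he
    set uu : Fin (n₀ + 1) → ℝ := fun i => (e i : ℝ) with huu
    have humono : Monotone uu := by
      intro i j hij
      exact Subtype.coe_le_coe.2 (e.monotone hij)
    have huu0 : uu 0 = 0 := by
      apply le_antisymm
      · have h1 : e 0 ≤ e (e.symm ⟨0, h0P⟩) := e.monotone (Fin.zero_le _)
        rw [e.apply_symm_apply] at h1
        exact Subtype.coe_le_coe.2 h1
      · exact (hPsub _ (e 0).2).1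
    have huu1 : uu (Fin.last n₀) = 1 := by
      apply le_antisymm
      · exact (hPsub _ (e (Fin.last n₀)).2).2
      · have h1 : e (e.symm ⟨1, h1P⟩) ≤ e (Fin.last n₀) := e.monotone (Fin.le_last _)
        rw [e.apply_symm_apply] at h1
        exact Subtype.coe_le_coe.2 h1
    -- no elements of P strictly inside half-tents of A
    have hnbl : ∀ p ∈ A, ∀ z ∈ P, ¬ (cantorLeft p.1 p.2 < z ∧ z < cantorMid p.1 p.2) := by
      intro p hpA z hzP ⟨hz1, hz2⟩
      have hk : p.2 < 2 ^ p.1 := ((memA p).1 hpA).2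
      have hztent : z ∈ removedInterval p.1 p.2 := ⟨hz1, lt_trans hz2 (mid_lt_right p.1 p.2)⟩
      rcases (memP z).1 hzP with rfl | rfl | ⟨p', hp'A, hcase⟩
      · exact absurd (removed_subset _ _ hztent).1 (lt_irrefl 0)
      · exact absurd (removed_subset _ _ hztent).2 (lt_irrefl 1)
      · have hk' : p'.2 < 2 ^ p'.1 := ((memA p').1 hp'A).2
        rcases hcase with rfl | rfl | rfl
        · exact cantorLeft_notMem p'.1 p'.2 p.1 p.2 hztent
        · obtain ⟨e1, e2⟩ := removed_disjoint hk' hk (mid_mem p'.1 p'.2) hztent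
          rw [show cantorMid p'.1 p'.2 = cantorMid p.1 p.2 by rw [e1, e2]] at hz2
          exact lt_irrefl _ hz2
        · exact cantorRight_notMem p'.1 p'.2 p.1 p.2 hztent
    have hnbr : ∀ p ∈ A, ∀ z ∈ P, ¬ (cantorMid p.1 p.2 < z ∧
        z < cantorLeft p.1 p.2 + (3:ℝ) ^ (-((p.1 : ℤ) + 1))) := by
      intro p hpA z hzP ⟨hz1, hz2⟩
      have hk : p.2 < 2 ^ p.1 := ((memA p).1 hpA).2
      have hztent : z ∈ removedInterval p.1 p.2 := ⟨lt_trans (left_lt_mid p.1 p.2) hz1, hz2⟩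
      rcases (memP z).1 hzP with rfl | rfl | ⟨p', hp'A, hcase⟩
      · exact absurd (removed_subset _ _ hztent).1 (lt_irrefl 0)
      · exact absurd (removed_subset _ _ hztent).2 (lt_irrefl 1)
      · have hk' : p'.2 < 2 ^ p'.1 := ((memA p').1 hp'A).2
        rcases hcase with rfl | rfl | rfl
        · exact cantorLeft_notMem p'.1 p'.2 p.1 p.2 hztent
        · obtain ⟨e1, e2⟩ := removed_disjoint hk' hk (mid_mem p'.1 p'.2) hztent
          rw [show cantorMid p'.1 p'.2 = cantorMid p.1 p.2 by rw [e1, e2]] at hz1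
          exact lt_irrefl _ hz1
        · exact cantorRight_notMem p'.1 p'.2 p.1 p.2 hztent
    -- membership of the three special points in P
    have hLP : ∀ p ∈ A, cantorLeft p.1 p.2 ∈ P := by
      intro p hpA
      exact (memP _).2 (Or.inr (Or.inr ⟨p, hpA, Or.inl rfl⟩))
    have hMP : ∀ p ∈ A, cantorMid p.1 p.2 ∈ P := by
      intro p hpA
      exact (memP _).2 (Or.inr (Or.inr ⟨p, hpA, Or.inr (Or.inl rfl)⟩))
    have hRP : ∀ p ∈ A, cantorLeft p.1 p.2 + (3:ℝ) ^ (-((p.1 : ℤ) + 1)) ∈ P := by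
      intro p hpA
      exact (memP _).2 (Or.inr (Or.inr ⟨p, hpA, Or.inr (Or.inr rfl)⟩))
    -- selection of partition increments
    set B : Finset ((ℕ × ℕ) × Bool) := A ×ˢ (Finset.univ : Finset Bool) with hB
    have memB : ∀ q : (ℕ × ℕ) × Bool, q ∈ B ↔ q.1 ∈ A := by
      intro q
      rw [hB, Finset.mem_product]
      simp
    have hsel : ∀ q : {q // q ∈ B}, ∃ i : Fin n₀,
        uu i.castSucc = (if q.1.2 then cantorMid q.1.1.1 q.1.1.2
          else cantorLeft q.1.1.1 q.1.1.2) ∧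
        ENNReal.ofReal (b q.1.1.1 - c)
          = ENNReal.ofReal (|x (uu i.succ) - x (uu i.castSucc)| - c) := by
      rintro ⟨⟨p, side⟩, hq⟩
      have hpA : p ∈ A := (memB _).1 hq
      have hk : p.2 < 2 ^ p.1 := ((memA p).1 hpA).2
      have hxL : x (cantorLeft p.1 p.2) = 0 := hxC _ (left_mem_C p.1 p.2)
      have hxR : x (cantorLeft p.1 p.2 + (3:ℝ) ^ (-((p.1 : ℤ) + 1))) = 0 :=
        hxC _ (right_mem_C p.1 p.2)
      have hxM : x (cantorMid p.1 p.2) = b p.1 := hxmid p.1 p.2 hk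
      rcases Bool.eq_false_or_eq_true side with rfl | rfl
      · obtain ⟨i, hi1, hi2⟩ := consec hcard (hMP p hpA) (hRP p hpA) (mid_lt_right p.1 p.2)
          (hnbr p hpA)
        have hi1' : uu i.castSucc = cantorMid p.1 p.2 := hi1
        have hi2' : uu i.succ = cantorLeft p.1 p.2 + (3:ℝ) ^ (-((p.1 : ℤ) + 1)) := hi2
        refine ⟨i, ?_, ?_⟩
        · simp only [if_true]
          exact hi1'
        · rw [hi1', hi2', hxM, hxR, zero_sub, abs_neg, abs_of_pos (hbpos p.1)]
      · obtain ⟨i, hi1, hi2⟩ := consec hcard (hLP p hpA) (hMP p hpA) (left_lt_mid p.1 p.2)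
          (hnbl p hpA)
        have hi1' : uu i.castSucc = cantorLeft p.1 p.2 := hi1
        have hi2' : uu i.succ = cantorMid p.1 p.2 := hi2
        refine ⟨i, ?_, ?_⟩
        · simp only [Bool.false_eq_true, if_false]
          exact hi1'
        · rw [hi1', hi2', hxM, hxL, sub_zero, abs_of_pos (hbpos p.1)]
    obtain ⟨G, hGspec⟩ := Classical.axiomOfChoice hsel
    -- injectivity of the start point determines the pair
    have hstartinj : ∀ q q' : {q // q ∈ B},
        (if q.1.2 then cantorMid q.1.1.1 q.1.1.2 else cantorLeft q.1.1.1 q.1.1.2)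
        = (if q'.1.2 then cantorMid q'.1.1.1 q'.1.1.2 else cantorLeft q'.1.1.1 q'.1.1.2)
        → q = q' := by
      rintro ⟨⟨p, side⟩, hq⟩ ⟨⟨p', side'⟩, hq'⟩ heq
      have hk : p.2 < 2 ^ p.1 := ((memA p).1 ((memB _).1 hq)).2
      have hk' : p'.2 < 2 ^ p'.1 := ((memA p').1 ((memB _).1 hq')).2
      apply Subtype.ext
      simp only
      rcases Bool.eq_false_or_eq_true side with rfl | rfl <;>
        rcases Bool.eq_false_or_eq_true side' with rfl | rfl <;>
        simp only [Bool.false_eq_true, if_false, if_true] at heq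
      · obtain ⟨e1, e2⟩ := mid_inj hk hk' heq
        rw [Prod.ext e1 e2]
      · exact absurd heq.symm (left_ne_mid p'.1 p'.2 p.1 p.2)
      · exact absurd heq (left_ne_mid p.1 p.2 p'.1 p'.2)
      · obtain ⟨e1, e2⟩ := left_inj hk hk' heq
        rw [Prod.ext e1 e2]
    have hGinj : ∀ q ∈ B.attach, ∀ q' ∈ B.attach, G q = G q' → q = q' := by
      intro q _ q' _ hGq
      apply hstartinj
      rw [← (hGspec q).1, ← (hGspec q').1, hGq]
    -- the main sum bound
    have hsum1 : ∑ p ∈ A, 2 * ENNReal.ofReal (b p.1 - c)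
        = ∑ q ∈ B.attach, ENNReal.ofReal (b q.1.1.1 - c) := by
      rw [Finset.sum_attach B (fun q => ENNReal.ofReal (b q.1.1 - c)), hB,
        Finset.sum_product]
      apply Finset.sum_congr rfl
      intro p _
      simp only [Finset.sum_const, Finset.card_univ, Fintype.card_bool, nsmul_eq_mul,
        Nat.cast_ofNat]
    have hsum2 : ∑ q ∈ B.attach, ENNReal.ofReal (b q.1.1.1 - c)
        ≤ ∑ i : Fin n₀, ENNReal.ofReal (|x (uu i.succ) - x (uu i.castSucc)| - c) := by
      calc ∑ q ∈ B.attach, ENNReal.ofReal (b q.1.1.1 - c)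
          = ∑ q ∈ B.attach, ENNReal.ofReal (|x (uu (G q).succ) - x (uu (G q).castSucc)| - c) :=
            Finset.sum_congr rfl (fun q _ => (hGspec q).2)
        _ = ∑ i ∈ B.attach.image G, ENNReal.ofReal (|x (uu i.succ) - x (uu i.castSucc)| - c) :=
            by rw [Finset.sum_image hGinj]
        _ ≤ ∑ i : Fin n₀, ENNReal.ofReal (|x (uu i.succ) - x (uu i.castSucc)| - c) :=
            Finset.sum_le_sum_of_subset (Finset.subset_univ _)
    rw [truncVar]
    calc ∑ p ∈ A, 2 * ENNReal.ofReal (b p.1 - c)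
        ≤ ∑ i : Fin n₀, ENNReal.ofReal (|x (uu i.succ) - x (uu i.castSucc)| - c) :=
          hsum1 ▸ hsum2
      _ ≤ _ := by
          apply le_iSup_of_le n₀
          apply le_iSup_of_le uu
          apply le_iSup_of_le humono
          apply le_iSup_of_le huu0
          apply le_iSup_of_le huu1
          exact le_refl _
  rw [hts, ← hsumA]
  exact le_antisymm hupper hlower
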